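/- Let (P,≻,q) be a problem. (i) If k > 1 and β^k(P,≻,q) is stable at (P,≻,q), then GS^k(P,≻,q) is stable at (P,≻,q) and GS^k is not manipulable at (P,≻,q). (ii) If k > ℓ > 1 and GS^ℓ(P,≻,q) is stable at (P,≻,q), then GS^k(P,≻,q) is stable at (P,≻,q) and GS^k is not manipulable at (P,≻,q). -/

import Mathlib

/-!
School choice framework following Bonkoungou–Nesterov,
"Reforms meet fairness concerns in school and college admissions".

Students `I` and schools `S` are finite types with `|I| > |S|`.
A strict preference relation of a student over `S ∪ {∅}` is represented by a list
of `Option S` containing every element exactly once (earlier = more preferred);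
`none` is the outside option.  A strict priority order of a school is a list of
`I` containing every student exactly once (earlier = higher priority).
-/

namespace SchoolChoice

variable {I S : Type*} [Fintype I] [DecidableEq I] [Fintype S] [DecidableEq S]

/-- `p` is a strict preference relation on `S ∪ {∅}`: a ranking list containing every
element of `Option S` exactly once. -/
def ValidPref (p : List (Option S)) : Prop := p.Nodup ∧ ∀ x : Option S, x ∈ p

/-- `pr` is a strict priority order: a ranking list containing every student exactly once. -/
def ValidPrio (pr : List I) : Prop := pr.Nodup ∧ ∀ i : I, i ∈ pr

/-- `a` is strictly preferred to `b` under the preference relation `p`. -/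
def prefLt (p : List (Option S)) (a b : Option S) : Prop := p.idxOf a < p.idxOf b

/-- `i` has strictly higher priority than `j` under the priority order `pr`. -/
def prioLt (pr : List I) (i j : I) : Prop := pr.idxOf i < pr.idxOf j

instance (p : List (Option S)) (a b : Option S) : Decidable (prefLt p a b) :=
  inferInstanceAs (Decidable (_ < _))

instance (pr : List I) (i j : I) : Decidable (prioLt pr i j) :=
  inferInstanceAs (Decidable (_ < _))

/-- The acceptable schools of `p` (those preferred to the outside option), in preference
order. -/
def acceptables (p : List (Option S)) : List S := (p.takeWhile Option.isSome).filterMap id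

/-- The truncation of `p` after its `k`-th acceptable school: the preference relation
listing, in the same order, only the `min k _` most-preferred acceptable schools of `p`,
all other schools being unacceptable (kept below `none` in their original order). -/
def truncate (p : List (Option S)) (k : ℕ) : List (Option S) :=
  ((acceptables p).take k).map some ++
    none :: p.filter (fun x => decide (x ≠ none ∧ x ∉ ((acceptables p).take k).map some))

/-- `μ` is a matching: it respects the capacities `q`. -/
def IsMatching (q : S → ℕ) (μ : I → Option S) : Prop :=
  ∀ s : S, (Finset.univ.filter (fun i => μ i = some s)).card ≤ q s

/-- The pair `(i, s)` blocks `μ` under the problem `(P, prio, q)`. -/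
def Blocks (P : I → List (Option S)) (prio : S → List I) (q : S → ℕ)
    (μ : I → Option S) (i : I) (s : S) : Prop :=
  prefLt (P i) (some s) (μ i) ∧
    ((Finset.univ.filter (fun j => μ j = some s)).card < q s ∨
      ∃ j : I, μ j = some s ∧ prioLt (prio s) i j)

/-- `i` is a blocking student for `μ` under `(P, prio, q)`. -/
def BlockingStudent (P : I → List (Option S)) (prio : S → List I) (q : S → ℕ)
    (μ : I → Option S) (i : I) : Prop :=
  ∃ s : S, Blocks P prio q μ i s

/-- `μ` is individually rational under `P`. -/
def IndividuallyRational (P : I → List (Option S)) (μ : I → Option S) : Prop :=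
  ∀ i : I, ¬ prefLt (P i) none (μ i)

/-- `μ` is stable at `(P, prio, q)`. -/
def IsStable (P : I → List (Option S)) (prio : S → List I) (q : S → ℕ)
    (μ : I → Option S) : Prop :=
  IndividuallyRational P μ ∧ ∀ i : I, ¬ BlockingStudent P prio q μ i

/-- The number of blocking students for `μ` under `(P, prio, q)`. -/
noncomputable def numBlocking (P : I → List (Option S)) (prio : S → List I) (q : S → ℕ)
    (μ : I → Option S) : ℕ :=
  {i : I | BlockingStudent P prio q μ i}.ncard

/-! ### The Gale–Shapley student-proposing deferred acceptance mechanism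

The state `σ : I → ℕ` records, for each student, how many of her acceptable schools
have already rejected her; she currently applies to the `σ i`-th school on her list
(if any).  At each round every school tentatively keeps the `q s` highest-priority
students among its current applicants and rejects the rest, who move on. -/

/-- The school student `i` currently applies to. -/
def daTarget (P : I → List (Option S)) (σ : I → ℕ) (i : I) : Option S :=
  (acceptables (P i))[σ i]?

/-- The students tentatively held by school `s`: the `q s` highest-priority current
applicants. -/
def daHeld (P : I → List (Option S)) (prio : S → List I) (q : S → ℕ)
    (σ : I → ℕ) (s : S) : List I :=
  ((prio s).filter (fun i => decide (daTarget P σ i = some s))).take (q s)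

/-- One round of deferred acceptance: every rejected student moves to her next choice. -/
def daStep (P : I → List (Option S)) (prio : S → List I) (q : S → ℕ)
    (σ : I → ℕ) : I → ℕ := fun i =>
  match daTarget P σ i with
  | none => σ i
  | some s => if i ∈ daHeld P prio q σ s then σ i else σ i + 1

/-- The Gale–Shapley (student-proposing deferred acceptance) mechanism.  Iterating the
round map `|I| * |S| + 1` times is guaranteed to reach the terminal state. -/
def GS (P : I → List (Option S)) (prio : S → List I) (q : S → ℕ) : I → Option S :=
  fun i =>
    let σ := (daStep P prio q)^[Fintype.card I * Fintype.card S + 1] (fun _ => 0)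
    match daTarget P σ i with
    | none => none
    | some s => if i ∈ daHeld P prio q σ s then some s else none

/-- The constrained Gale–Shapley mechanism `GS^k`. -/
def GSk (k : ℕ) (P : I → List (Option S)) (prio : S → List I) (q : S → ℕ) : I → Option S :=
  GS (fun i => truncate (P i) k) prio q

/-! ### The Boston (immediate acceptance) mechanism -/

/-- Round `t` of the Boston mechanism: each not-yet-accepted student applies to her
`t`-th ranked acceptable school (0-indexed), and each school permanently accepts, up to
its remaining capacity, its highest-priority new applicants. -/
def bostonRound (P : I → List (Option S)) (prio : S → List I) (q : S → ℕ)
    (μ : I → Option S) (t : ℕ) : I → Option S := fun i =>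
  match μ i with
  | some s => some s
  | none =>
    match (acceptables (P i))[t]? with
    | none => none
    | some s =>
      if i ∈ ((prio s).filter
            (fun j => decide (μ j = none ∧ (acceptables (P j))[t]? = some s))).take
          (q s - (Finset.univ.filter (fun j => μ j = some s)).card)
      then some s else none

/-- The Boston (immediate acceptance) mechanism. -/
def Boston (P : I → List (Option S)) (prio : S → List I) (q : S → ℕ) : I → Option S :=
  (List.range (Fintype.card S)).foldl (bostonRound P prio q) (fun _ => none)

/-- The constrained Boston mechanism `β^k`. -/
def Bostonk (k : ℕ) (P : I → List (Option S)) (prio : S → List I) (q : S → ℕ) :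
    I → Option S :=
  Boston (fun i => truncate (P i) k) prio q

/-! ### The first-preference-first mechanism -/

/-- The adjusted priority profile: each first-preference-first school (member of `fpf`)
ranks students first by the rank they assign to it under `P` (counting the ranking of the
outside option as well), ties broken by the original priority; equal-preference schools
keep their original priority. -/
def fpfPrio (fpf : Finset S) (P : I → List (Option S)) (prio : S → List I) : S → List I :=
  fun s =>
    if s ∈ fpf then
      (List.range (Fintype.card S + 1)).flatMap
        (fun r => (prio s).filter (fun i => decide ((P i).idxOf (some s) = r)))
    else prio s

/-- The first-preference-first mechanism with set `fpf` of first-preference-first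
schools: Gale–Shapley run on the adjusted priorities. -/
def FPF (fpf : Finset S) (P : I → List (Option S)) (prio : S → List I) (q : S → ℕ) :
    I → Option S :=
  GS P (fpfPrio fpf P prio) q

/-- The constrained first-preference-first mechanism `FPF^k`. -/
def FPFk (fpf : Finset S) (k : ℕ) (P : I → List (Option S)) (prio : S → List I)
    (q : S → ℕ) : I → Option S :=
  FPF fpf (fun i => truncate (P i) k) prio q

/-! ### Manipulation and equilibrium notions -/

/-- Student `i` is a manipulating student of the mechanism `φ` (with priorities and
capacities fixed) at the true profile `P`. -/
def ManipulatingStudent (φ : (I → List (Option S)) → I → Option S)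
    (P : I → List (Option S)) (i : I) : Prop :=
  ∃ Q : List (Option S), ValidPref Q ∧
    prefLt (P i) (φ (Function.update P i Q) i) (φ P i)

/-- The mechanism `φ` is not manipulable at `P`. -/
def NotManipulable (φ : (I → List (Option S)) → I → Option S)
    (P : I → List (Option S)) : Prop :=
  ∀ i : I, ¬ ManipulatingStudent φ P i

/-- `P'` is a Nash equilibrium of the game `(φ, P)` in which the sophisticated students
are the members of `M` (who may misreport, and best respond) and all other (sincere)
students report truthfully. -/
def NashEq (φ : (I → List (Option S)) → I → Option S) (P : I → List (Option S))
    (M : Finset I) (P' : I → List (Option S)) : Prop :=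
  (∀ i, ValidPref (P' i)) ∧ (∀ i ∉ M, P' i = P i) ∧
    ∀ i ∈ M, ∀ Q : List (Option S), ValidPref Q →
      ¬ prefLt (P i) (φ (Function.update P' i Q) i) (φ P' i)

/-! ### Semi-sophisticated students -/

/-- Student `i` is guaranteed her first choice `s`: `s` is her most-preferred acceptable
school and `i` is among the `q s` highest-priority students at `s`. -/
def GuaranteedFirstChoice (P : I → List (Option S)) (prio : S → List I) (q : S → ℕ)
    (i : I) (s : S) : Prop :=
  (acceptables (P i)).head? = some s ∧ (prio s).idxOf i < q s

instance (P : I → List (Option S)) (prio : S → List I) (q : S → ℕ) (i : I) (s : S) :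
    Decidable (GuaranteedFirstChoice P prio q i s) :=
  inferInstanceAs (Decidable (_ ∧ _))

/-- School `s` is competitive: at least `q s` students are guaranteed their first
choice `s`. -/
def Competitive (P : I → List (Option S)) (prio : S → List I) (q : S → ℕ) (s : S) : Prop :=
  q s ≤ (Finset.univ.filter (fun i => GuaranteedFirstChoice P prio q i s)).card

instance (P : I → List (Option S)) (prio : S → List I) (q : S → ℕ) (s : S) :
    Decidable (Competitive P prio q s) :=
  inferInstanceAs (Decidable (_ ≤ _))

/-- `P'` is a Nash equilibrium of the game `(GS^ℓ, P)` with semi-sophisticated students: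
every student guaranteed her first choice reports truthfully; every other student reports
truthfully if she has at most `ℓ` acceptable schools or all her acceptable schools are
competitive, and otherwise lists as acceptable, in the order given by her true preference,
only her acceptable schools that are not competitive. -/
def SemiSophProfile (ℓ : ℕ) (P : I → List (Option S)) (prio : S → List I) (q : S → ℕ)
    (P' : I → List (Option S)) : Prop :=
  ∀ i : I,
    ((∃ s : S, GuaranteedFirstChoice P prio q i s) → P' i = P i) ∧
    (¬ (∃ s : S, GuaranteedFirstChoice P prio q i s) →
      (((acceptables (P i)).length ≤ ℓ ∨ ∀ s ∈ acceptables (P i), Competitive P prio q s) →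
          P' i = P i) ∧
      (¬ ((acceptables (P i)).length ≤ ℓ ∨
            ∀ s ∈ acceptables (P i), Competitive P prio q s) →
          acceptables (P' i) =
            (acceptables (P i)).filter (fun s => decide (¬ Competitive P prio q s))))


/-! ### Auxiliary infrastructure -/
set_option linter.unusedSectionVars false

section BIdx

variable {α : Type*} [BEq α] [LawfulBEq α]

lemma bidx_cons_self (a : α) (l : List α) : (a :: l).idxOf a = 0 := by
  simp [List.idxOf_cons]

lemma bidx_cons_ne {a b : α} (l : List α) (h : b ≠ a) :
    (b :: l).idxOf a = (l.idxOf a) + 1 := by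
  have hb : (b == a) = false := beq_eq_false_iff_ne.mpr h
  simp [List.idxOf_cons, hb]

lemma bidx_append_of_mem {a : α} {l₁ : List α} (l₂ : List α) (h : a ∈ l₁) :
    (l₁ ++ l₂).idxOf a = l₁.idxOf a := by
  induction l₁ with
  | nil => simp at h
  | cons b t ih =>
    by_cases hb : b = a
    · subst hb; simp [bidx_cons_self]
    · rw [List.cons_append, bidx_cons_ne _ hb, bidx_cons_ne _ hb,
        ih (by rcases List.mem_cons.mp h with h' | h' <;> [exact absurd h'.symm hb; exact h'])]

lemma bidx_append_of_not_mem {a : α} {l₁ : List α} (l₂ : List α) (h : a ∉ l₁) :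
    (l₁ ++ l₂).idxOf a = l₁.length + l₂.idxOf a := by
  induction l₁ with
  | nil => simp
  | cons b t ih =>
    have hb : b ≠ a := fun hc => h (by simp [hc])
    rw [List.cons_append, bidx_cons_ne _ hb, ih (fun hc => h (by simp [hc])),
      List.length_cons]
    omega

lemma bidx_lt_length_iff {a : α} {l : List α} : a ∈ l ↔ l.idxOf a < l.length := by
  induction l with
  | nil => simp
  | cons b t ih =>
    by_cases hb : b = a
    · subst hb; simp [bidx_cons_self]
    · rw [bidx_cons_ne _ hb, List.length_cons, List.mem_cons]
      constructor
      · rintro (h | h)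
        · exact absurd h.symm hb
        · exact Nat.succ_lt_succ (ih.mp h)
      · intro h; right; exact ih.mpr (by omega)

lemma bidx_inj {a b : α} {l : List α} (ha : a ∈ l) (hb : b ∈ l)
    (h : l.idxOf a = l.idxOf b) : a = b := by
  induction l with
  | nil => simp at ha
  | cons c t ih =>
    by_cases hca : c = a <;> by_cases hcb : c = b
    · exact hca ▸ hcb ▸ rfl
    · subst hca
      rw [bidx_cons_self, bidx_cons_ne _ hcb] at h
      omega
    · subst hcb
      rw [bidx_cons_self, bidx_cons_ne _ hca] at h
      omega
    · rw [bidx_cons_ne _ hca, bidx_cons_ne _ hcb] at h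
      exact ih (by rcases List.mem_cons.mp ha with h'|h' <;> [exact absurd h'.symm hca; exact h'])
        (by rcases List.mem_cons.mp hb with h'|h' <;> [exact absurd h'.symm hcb; exact h'])
        (by omega)

end BIdx

section Aux

lemma aux_all_isSome_eq_map (l : List (Option S)) (h : ∀ x ∈ l, x.isSome) :
    l = (l.filterMap id).map some := by
  induction l with
  | nil => simp
  | cons x xs ih =>
    obtain ⟨a, rfl⟩ := Option.isSome_iff_exists.mp (h x (by simp))
    simp only [List.filterMap_cons]
    simpa using ih (fun y hy => h y (by simp [hy]))

lemma takeWhile_eq_map_acceptables (p : List (Option S)) :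
    p.takeWhile Option.isSome = (acceptables p).map some :=
  aux_all_isSome_eq_map _ (fun _ hx => List.mem_takeWhile_imp hx)

lemma mem_acceptables {p : List (Option S)} {s : S} :
    s ∈ acceptables p ↔ some s ∈ p.takeWhile Option.isSome := by
  simp [acceptables, List.mem_filterMap]

lemma acceptables_sublist (p : List (Option S)) :
    List.Sublist ((acceptables p).map some) p := by
  rw [← takeWhile_eq_map_acceptables]
  exact List.takeWhile_sublist _

lemma acceptables_nodup {p : List (Option S)} (hp : p.Nodup) : (acceptables p).Nodup := by
  have h1 : ((acceptables p).map some).Nodup := ((acceptables_sublist p).nodup hp)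
  exact h1.of_map _

lemma mem_of_mem_acceptables {p : List (Option S)} {s : S} (h : s ∈ acceptables p) :
    some s ∈ p :=
  (acceptables_sublist p).subset (List.mem_map_of_mem (f := some) h)

lemma indexOf_map_some (l : List S) (s : S) :
    (l.map some).idxOf (some s) = l.idxOf s := by
  induction l with
  | nil => simp
  | cons a t ih =>
    by_cases has : a = s
    · subst has; simp [bidx_cons_self]
    · rw [List.map_cons, bidx_cons_ne _ (by simpa using has),
        List.idxOf_cons_ne _ has, ih]

lemma indexOf_none_eq (p : List (Option S)) (hp : ValidPref p) :
    p.idxOf (none : Option S) = (acceptables p).length := by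
  conv_lhs => rw [← List.takeWhile_append_dropWhile (p := Option.isSome) (l := p)]
  have hnm : (none : Option S) ∉ p.takeWhile Option.isSome := by
    intro hmem
    have := List.mem_takeWhile_imp hmem
    simp at this
  rw [bidx_append_of_not_mem _ hnm, takeWhile_eq_map_acceptables, List.length_map]
  have hmem : (none : Option S) ∈ p.dropWhile Option.isSome := by
    have h0 : (none : Option S) ∈ p := hp.2 none
    rw [← List.takeWhile_append_dropWhile (p := Option.isSome) (l := p), List.mem_append] at h0
    rcases h0 with h | h
    · exact absurd h hnm
    · exact h
  have hne : p.dropWhile Option.isSome ≠ [] := List.ne_nil_of_mem hmem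
  have hhead : (p.dropWhile Option.isSome).head hne = none := by
    have := List.head_dropWhile_not Option.isSome (l := p) hne
    cases hh : (p.dropWhile Option.isSome).head hne with
    | none => rfl
    | some a => rw [hh] at this; simp at this
  rw [← List.cons_head_tail hne, hhead, bidx_cons_self]
  omega

lemma indexOf_some_eq {p : List (Option S)} {s : S} (h : s ∈ acceptables p) :
    p.idxOf (some s) = (acceptables p).idxOf s := by
  conv_lhs => rw [← List.takeWhile_append_dropWhile (p := Option.isSome) (l := p)]
  rw [takeWhile_eq_map_acceptables,
    bidx_append_of_mem _ (List.mem_map_of_mem (f := some) h), indexOf_map_some]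

lemma mem_acceptables_iff_indexOf {p : List (Option S)} (hp : ValidPref p) {s : S} :
    s ∈ acceptables p ↔ p.idxOf (some s) < p.idxOf (none : Option S) := by
  constructor
  · intro h
    rw [indexOf_none_eq p hp, indexOf_some_eq h]
    exact List.idxOf_lt_length_iff.mpr h
  · intro h
    by_contra hmem
    rw [indexOf_none_eq p hp] at h
    conv_lhs at h => rw [← List.takeWhile_append_dropWhile (p := Option.isSome) (l := p)]
    rw [bidx_append_of_not_mem _ (by
      rw [takeWhile_eq_map_acceptables]
      intro hc
      exact hmem (by simpa using hc)), takeWhile_eq_map_acceptables, List.length_map] at h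
    omega

end Aux

section TakeIdx

variable {α : Type*} [DecidableEq α]

lemma indexOf_lt_of_mem_take {l : List α} {x : α} {n : ℕ} (h : x ∈ l.take n) :
    l.idxOf x < n := by
  have hidx : l.idxOf x < (l.take n).length := by
    conv_lhs => rw [← List.take_append_drop n l]
    rw [List.idxOf_append_of_mem h]
    exact List.idxOf_lt_length_iff.mpr h
  have := @List.length_take _ n l
  omega

lemma mem_take_of_indexOf {l : List α} {x : α} {n : ℕ} (hx : x ∈ l)
    (h : l.idxOf x < n) : x ∈ l.take n := by
  have hlen : l.idxOf x < l.length := List.idxOf_lt_length_iff.mpr hx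
  have hx' : (l.take n)[l.idxOf x]'(by simp [List.length_take]; omega) = x := by
    rw [List.getElem_take]
    exact List.getElem_idxOf hlen
  exact hx' ▸ List.getElem_mem _

lemma indexOf_take_eq {l : List α} {x : α} {n : ℕ} (h : x ∈ l.take n) :
    (l.take n).idxOf x = l.idxOf x := by
  conv_rhs => rw [← List.take_append_drop n l]
  rw [List.idxOf_append_of_mem h]

end TakeIdx

section PrioHelpers

lemma filter_prio_lt {l : List I} (hl : l.Nodup) (pred : I → Bool) {m m' : ℕ}
    (hm : m < m') (hm' : m' < (l.filter pred).length) :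
    prioLt l ((l.filter pred)[m]'(by omega)) ((l.filter pred)[m']'hm') := by
  have hp : l.Pairwise (fun a b => l.idxOf a < l.idxOf b) := by
    rw [List.pairwise_iff_getElem]
    intro i j hi hj hij
    rw [List.Nodup.idxOf_getElem hl, List.Nodup.idxOf_getElem hl]
    exact hij
  have hF : (l.filter pred).Pairwise (fun a b => l.idxOf a < l.idxOf b) :=
    hp.sublist (List.filter_sublist (l := l))
  exact (List.pairwise_iff_getElem.mp hF) m m' _ hm' hm

lemma mem_take_prioLt {l : List I} (hl : l.Nodup) {pred : I → Bool} {n : ℕ} {i j : I}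
    (hi : i ∈ l.filter pred) (hni : i ∉ (l.filter pred).take n)
    (hj : j ∈ (l.filter pred).take n) : prioLt l j i := by
  have hiF : (l.filter pred).idxOf i < (l.filter pred).length :=
    List.idxOf_lt_length_iff.mpr hi
  have hidxi : n ≤ (l.filter pred).idxOf i := by
    by_contra h
    exact hni (mem_take_of_indexOf hi (by omega))
  have hjidx : (l.filter pred).idxOf j < n := indexOf_lt_of_mem_take hj
  have hjF : j ∈ l.filter pred := (List.take_sublist _ _).subset hj
  have h1 := filter_prio_lt hl pred (m := (l.filter pred).idxOf j)
    (m' := (l.filter pred).idxOf i) (by omega) (by omega)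
  rwa [List.getElem_idxOf (by omega), List.getElem_idxOf (by omega)] at h1

lemma take_prioLt_of_subset {l : List I} (hl : l.Nodup) {pred : I → Bool} {n : ℕ} {X : I}
    (T : Finset I) (hT : n ≤ T.card) (hTsub : ∀ j ∈ T, j ∈ l.filter pred)
    (hTlt : ∀ j ∈ T, prioLt l j X) :
    ∀ x ∈ (l.filter pred).take n, prioLt l x X := by
  intro x hx
  have hxF : x ∈ l.filter pred := (List.take_sublist _ _).subset hx
  have hxlen : (l.filter pred).idxOf x < (l.filter pred).length :=
    List.idxOf_lt_length_iff.mpr hxF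
  have hxn : (l.filter pred).idxOf x < n := indexOf_lt_of_mem_take hx
  by_contra hcon
  have hkey : ∀ j ∈ T, (l.filter pred).idxOf j < (l.filter pred).idxOf x := by
    intro j hj
    have hjF := hTsub j hj
    have hjlen : (l.filter pred).idxOf j < (l.filter pred).length :=
      List.idxOf_lt_length_iff.mpr hjF
    rcases lt_trichotomy ((l.filter pred).idxOf j) ((l.filter pred).idxOf x)
      with h | h | h
    · exact h
    · exact absurd (List.idxOf_inj (y := x) hjF |>.mp h ▸ hTlt j hj) hcon
    · have h2 := filter_prio_lt hl pred (m := (l.filter pred).idxOf x)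
        (m' := (l.filter pred).idxOf j) h hjlen
      rw [List.getElem_idxOf hxlen, List.getElem_idxOf hjlen] at h2
      have hjX := hTlt j hj
      unfold prioLt at h2 hjX hcon
      omega
  have hinj : Set.InjOn (fun j => (l.filter pred).idxOf j) T := by
    intro a ha b hb hab
    exact List.idxOf_inj (y := b) (hTsub a ha) |>.mp hab
  have hcard := Finset.card_le_card_of_injOn (fun j => (l.filter pred).idxOf j)
    (fun j hj => Finset.mem_range.mpr (hkey j hj)) hinj
  rw [Finset.card_range] at hcard
  omega

end PrioHelpers

/-! ### Abstract deferred acceptance -/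

/-- Abstract target. -/
def aTarget (A : I → List S) (σ : I → ℕ) (i : I) : Option S := (A i)[σ i]?

/-- Abstract held list. -/
def aHeld (A : I → List S) (prio : S → List I) (q : S → ℕ) (σ : I → ℕ) (s : S) : List I :=
  ((prio s).filter (fun i => decide (aTarget A σ i = some s))).take (q s)

/-- Abstract DA round. -/
def aStep (A : I → List S) (prio : S → List I) (q : S → ℕ) (σ : I → ℕ) : I → ℕ := fun i =>
  match aTarget A σ i with
  | none => σ i
  | some s => if i ∈ aHeld A prio q σ s then σ i else σ i + 1

/-- Terminal DA state. -/
def daState (A : I → List S) (prio : S → List I) (q : S → ℕ) : I → ℕ :=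
  (aStep A prio q)^[Fintype.card I * Fintype.card S + 1] (fun _ => 0)

/-- Abstract DA mechanism. -/
def aDA (A : I → List S) (prio : S → List I) (q : S → ℕ) : I → Option S := fun i =>
  let σ := daState A prio q
  match aTarget A σ i with
  | none => none
  | some s => if i ∈ aHeld A prio q σ s then some s else none

lemma GS_eq_aDA (P : I → List (Option S)) (prio : S → List I) (q : S → ℕ) :
    GS P prio q = aDA (fun i => acceptables (P i)) prio q := rfl

/-- `s` is strictly better than the assignment `o` in the ranking `L`. -/
def ABetter (L : List S) (s : S) (o : Option S) : Prop :=
  match o with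
  | none => s ∈ L
  | some u => u ∈ L ∧ L.idxOf s < L.idxOf u

/-- Abstract stability. -/
def AStable (A : I → List S) (prio : S → List I) (q : S → ℕ) (μ : I → Option S) : Prop :=
  (∀ i s, μ i = some s → s ∈ A i) ∧ IsMatching q μ ∧
  ∀ i s, ¬(ABetter (A i) s (μ i) ∧
    ((Finset.univ.filter (fun j => μ j = some s)).card < q s ∨
      ∃ j : I, μ j = some s ∧ prioLt (prio s) i j))

section CoreDA

variable (A : I → List S) (prio : S → List I) (q : S → ℕ)

lemma aStep_le (σ : I → ℕ) (i : I) : σ i ≤ aStep A prio q σ i := by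
  unfold aStep
  cases h : aTarget A σ i with
  | none => simp
  | some s => simp only; split <;> omega

lemma aStep_lt_of_ne (σ : I → ℕ) (h : aStep A prio q σ ≠ σ) :
    ∑ i : I, σ i < ∑ i : I, aStep A prio q σ i := by
  have hne : ∃ i, aStep A prio q σ i ≠ σ i := by
    by_contra hc
    push_neg at hc
    exact h (funext hc)
  obtain ⟨i, hi⟩ := hne
  apply Finset.sum_lt_sum (fun j _ => aStep_le A prio q σ j)
  exact ⟨i, Finset.mem_univ i, lt_of_le_of_ne (aStep_le A prio q σ i) (Ne.symm hi)⟩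

lemma aStep_bound (σ : I → ℕ) (h : ∀ i, σ i ≤ (A i).length) (i : I) :
    aStep A prio q σ i ≤ (A i).length := by
  unfold aStep
  cases ht : aTarget A σ i with
  | none => exact h i
  | some s =>
    have hlt : σ i < (A i).length := by
      by_contra hc
      rw [aTarget, List.getElem?_eq_none (by omega)] at ht
      exact absurd ht (by simp)
    simp only
    split <;> omega

lemma daState_bound (t : ℕ) (i : I) :
    ((aStep A prio q)^[t] (fun _ => 0)) i ≤ (A i).length := by
  induction t generalizing i with
  | zero => simp
  | succ n ih =>
    rw [Function.iterate_succ_apply']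
    exact aStep_bound A prio q _ ih i

lemma daState_fix (hA : ∀ i, (A i).Nodup) :
    aStep A prio q (daState A prio q) = daState A prio q := by
  set f := aStep A prio q with hf
  set M := Fintype.card I * Fintype.card S with hM
  have hbound : ∀ t, ∑ i : I, (f^[t] (fun _ => 0)) i ≤ M := by
    intro t
    calc ∑ i : I, (f^[t] (fun _ => 0)) i ≤ ∑ i : I, Fintype.card S := by
          apply Finset.sum_le_sum
          intro i _
          exact le_trans (daState_bound A prio q t i) ((hA i).length_le_card)
      _ = M := by rw [Finset.sum_const, Finset.card_univ, smul_eq_mul, hM]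
  have hexists : ∃ t ≤ M, f (f^[t] (fun _ => 0)) = f^[t] (fun _ => 0) := by
    by_contra hc
    push_neg at hc
    have hgrow : ∀ t, t ≤ M + 1 → t ≤ ∑ i : I, (f^[t] (fun _ => 0)) i := by
      intro t
      induction t with
      | zero => intro _; omega
      | succ n ih =>
        intro hn
        have h1 := ih (by omega)
        have h2 : ∑ i : I, (f^[n] (fun _ => 0)) i < ∑ i : I, (f (f^[n] (fun _ => 0))) i :=
          aStep_lt_of_ne A prio q _ (hc n (by omega))
        rw [Function.iterate_succ_apply']
        omega
    have := hgrow (M + 1) le_rfl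
    have := hbound (M + 1)
    omega
  obtain ⟨t, htM, hfix⟩ := hexists
  have hstate : daState A prio q = f^[t] (fun _ => 0) := by
    rw [daState, ← hf, show M + 1 = (M + 1 - t) + t by omega,
      Function.iterate_add_apply]
    exact Function.iterate_fixed hfix (M + 1 - t)
  rw [hstate]
  exact hfix

variable {A prio q}

lemma mem_filter_target {σ : I → ℕ} {s : S} {j : I} (hprio : ∀ s, ValidPrio (prio s)) :
    j ∈ (prio s).filter (fun i => decide (aTarget A σ i = some s)) ↔
      aTarget A σ j = some s := by
  rw [List.mem_filter]
  simp [(hprio s).2 j]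

lemma held_target {σ : I → ℕ} {s : S} {j : I} (h : j ∈ aHeld A prio q σ s) :
    aTarget A σ j = some s := by
  have := (List.take_sublist _ _).subset h
  rw [List.mem_filter] at this
  simpa using this.2

lemma fix_held (hA : ∀ i, (A i).Nodup) {i : I} {s : S}
    (ht : aTarget A (daState A prio q) i = some s) :
    i ∈ aHeld A prio q (daState A prio q) s := by
  have hfix := congrFun (daState_fix A prio q hA) i
  rw [aStep, ht] at hfix
  change (if i ∈ aHeld A prio q (daState A prio q) s then daState A prio q i
    else daState A prio q i + 1) = daState A prio q i at hfix
  by_contra hc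
  rw [if_neg hc] at hfix
  omega

lemma aDA_eq_target (hA : ∀ i, (A i).Nodup) (i : I) :
    aDA A prio q i = aTarget A (daState A prio q) i := by
  rw [aDA]
  cases ht : aTarget A (daState A prio q) i with
  | none => simp [ht]
  | some s => simp [ht, fix_held hA ht]

lemma filter_len_le (hA : ∀ i, (A i).Nodup) (hprio : ∀ s, ValidPrio (prio s)) (s : S) :
    ((prio s).filter (fun i => decide (aTarget A (daState A prio q) i = some s))).length
      ≤ q s := by
  set F := (prio s).filter (fun i => decide (aTarget A (daState A prio q) i = some s))
    with hF
  by_contra hc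
  push_neg at hc
  have hmem : F[q s]'(by omega) ∈ F := List.getElem_mem _
  have htar : aTarget A (daState A prio q) (F[q s]'(by omega)) = some s :=
    (mem_filter_target hprio).mp hmem
  have hheld := fix_held hA htar
  rw [aHeld, ← hF] at hheld
  have hidx := indexOf_lt_of_mem_take hheld
  have hFnodup : F.Nodup := (hprio s).1.filter _
  rw [List.Nodup.idxOf_getElem hFnodup] at hidx
  omega

lemma held_eq_filter (hA : ∀ i, (A i).Nodup) (hprio : ∀ s, ValidPrio (prio s)) (s : S) :
    aHeld A prio q (daState A prio q) s =
      (prio s).filter (fun i => decide (aTarget A (daState A prio q) i = some s)) := by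
  rw [aHeld]
  exact List.take_of_length_le (filter_len_le hA hprio s)

lemma aDA_fiber (hA : ∀ i, (A i).Nodup) (hprio : ∀ s, ValidPrio (prio s)) (s : S) :
    (Finset.univ.filter (fun j => aDA A prio q j = some s)).card =
      ((prio s).filter (fun i => decide (aTarget A (daState A prio q) i = some s))).length
      := by
  set F := (prio s).filter (fun i => decide (aTarget A (daState A prio q) i = some s))
    with hF
  have hFnodup : F.Nodup := (hprio s).1.filter _
  rw [← List.toFinset_card_of_nodup hFnodup]
  congr 1
  ext j
  rw [Finset.mem_filter, List.mem_toFinset, hF, mem_filter_target hprio,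
    aDA_eq_target hA]
  simp

lemma aDA_isMatching (hA : ∀ i, (A i).Nodup) (hprio : ∀ s, ValidPrio (prio s)) :
    IsMatching q (aDA A prio q) := by
  intro s
  rw [aDA_fiber hA hprio s]
  exact filter_len_le hA hprio s

end CoreDA

section DAInvariants

variable {A : I → List S} {prio : S → List I} {q : S → ℕ}

/-- The key property: school `s` holds a full class, all with higher priority than `i`. -/
def HState (A : I → List S) (prio : S → List I) (q : S → ℕ) (σ : I → ℕ) (i : I) (s : S) :
    Prop :=
  q s ≤ (aHeld A prio q σ s).length ∧ ∀ j ∈ aHeld A prio q σ s, prioLt (prio s) j i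

lemma getElem_eq_of_indexOf {α : Type*} [DecidableEq α] {l : List α} {s : α} {n : ℕ}
    (hn : n < l.length) (hidx : l.idxOf s = n) : l[n] = s := by
  subst hidx
  exact List.getElem_idxOf hn

lemma held_nodup (hprio : ∀ s, ValidPrio (prio s)) (σ : I → ℕ) (s : S) :
    (aHeld A prio q σ s).Nodup :=
  (List.take_sublist _ _).nodup ((hprio s).1.filter _)

lemma aStep_cases (σ : I → ℕ) (i : I) :
    aStep A prio q σ i = σ i ∨
      (aStep A prio q σ i = σ i + 1 ∧
        ∃ s, aTarget A σ i = some s ∧ i ∉ aHeld A prio q σ s) := by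
  cases ht : aTarget A σ i with
  | none => left; simp [aStep, ht]
  | some s =>
    by_cases hh : i ∈ aHeld A prio q σ s
    · left; simp [aStep, ht, hh]
    · right; exact ⟨by simp [aStep, ht, hh], s, rfl, hh⟩

lemma held_subset_filter_step (hprio : ∀ s, ValidPrio (prio s)) {σ : I → ℕ} {s : S} :
    ∀ j ∈ aHeld A prio q σ s,
      j ∈ (prio s).filter (fun i => decide (aTarget A (aStep A prio q σ) i = some s)) := by
  intro j hj
  have ht := held_target hj
  have hstep : aStep A prio q σ j = σ j := by simp [aStep, ht, hj]
  rw [mem_filter_target hprio]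
  show (A j)[(aStep A prio q σ) j]? = some s
  rw [hstep]
  exact ht

lemma Hmono (hprio : ∀ s, ValidPrio (prio s)) {σ : I → ℕ} {i : I} {s : S}
    (h : HState A prio q σ i s) : HState A prio q (aStep A prio q σ) i s := by
  obtain ⟨hlen, hlt⟩ := h
  have hsub := held_subset_filter_step (A := A) (q := q) hprio (σ := σ) (s := s)
  have hcard : q s ≤
      ((prio s).filter (fun i => decide (aTarget A (aStep A prio q σ) i = some s))).length
      := by
    have h1 : (aHeld A prio q σ s).toFinset.card = (aHeld A prio q σ s).length :=
      List.toFinset_card_of_nodup (held_nodup hprio σ s)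
    have h2 : (aHeld A prio q σ s).toFinset ⊆
        ((prio s).filter (fun i => decide (aTarget A (aStep A prio q σ) i = some s))).toFinset
        := by
      intro j hj
      rw [List.mem_toFinset] at *
      exact hsub j hj
    have h3 := Finset.card_le_card h2
    rw [List.toFinset_card_of_nodup ((hprio s).1.filter _)] at h3
    omega
  constructor
  · rw [aHeld, List.length_take]
    omega
  · intro x hx
    rw [aHeld] at hx
    exact take_prioLt_of_subset (hprio s).1 (aHeld A prio q σ s).toFinset
      (by rw [List.toFinset_card_of_nodup (held_nodup hprio σ s)]; exact hlen)
      (fun j hj => hsub j (List.mem_toFinset.mp hj))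
      (fun j hj => hlt j (List.mem_toFinset.mp hj)) x hx

lemma Hreject (hprio : ∀ s, ValidPrio (prio s)) {σ : I → ℕ} {i : I} {s : S}
    (ht : aTarget A σ i = some s) (hni : i ∉ aHeld A prio q σ s) :
    HState A prio q σ i s := by
  have hiF : i ∈ (prio s).filter (fun j => decide (aTarget A σ j = some s)) :=
    (mem_filter_target hprio).mpr ht
  have hnotake : i ∉ ((prio s).filter (fun j => decide (aTarget A σ j = some s))).take (q s)
      := fun h => hni (by rw [aHeld]; exact h)
  have hidx : q s ≤ ((prio s).filter (fun j => decide (aTarget A σ j = some s))).idxOf i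
      := by
    by_contra h
    exact hnotake (mem_take_of_indexOf hiF (by omega))
  have hlen : ((prio s).filter (fun j => decide (aTarget A σ j = some s))).idxOf i <
      ((prio s).filter (fun j => decide (aTarget A σ j = some s))).length :=
    List.idxOf_lt_length_iff.mpr hiF
  constructor
  · rw [aHeld, List.length_take]
    omega
  · intro j hj
    rw [aHeld] at hj
    exact mem_take_prioLt (hprio s).1 hiF hnotake hj

lemma Kinv (hA : ∀ i, (A i).Nodup) (hprio : ∀ s, ValidPrio (prio s)) :
    ∀ (t : ℕ) (i : I) (s : S),
      (A i).idxOf s < ((aStep A prio q)^[t] (fun _ => 0)) i →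
      HState A prio q ((aStep A prio q)^[t] (fun _ => 0)) i s := by
  intro t
  induction t with
  | zero => intro i s h; simp at h
  | succ n ih =>
    intro i s h
    rw [Function.iterate_succ_apply'] at h ⊢
    by_cases hlt : (A i).idxOf s < ((aStep A prio q)^[n] (fun _ => 0)) i
    · exact Hmono hprio (ih i s hlt)
    · rcases aStep_cases (A := A) (prio := prio) (q := q)
        ((aStep A prio q)^[n] (fun _ => 0)) i with heq | ⟨heq, t₀, ht, hni⟩
      · rw [heq] at h; omega
      · rw [heq] at h
        have hidx : (A i).idxOf s = ((aStep A prio q)^[n] (fun _ => 0)) i := by omega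
        obtain ⟨hlen2, hEq⟩ := List.getElem?_eq_some_iff.mp ht
        have hst : s = t₀ :=
          ((getElem_eq_of_indexOf hlen2 hidx).symm).trans hEq
        subst hst
        exact Hmono hprio (Hreject hprio ht hni)

lemma KinvFix (hA : ∀ i, (A i).Nodup) (hprio : ∀ s, ValidPrio (prio s)) {i : I} {s : S}
    (h : (A i).idxOf s < daState A prio q i) :
    HState A prio q (daState A prio q) i s :=
  Kinv hA hprio (Fintype.card I * Fintype.card S + 1) i s h

/-- The DA outcome is stable (w.r.t. the lists `A`). -/
theorem aDA_stable (hA : ∀ i, (A i).Nodup) (hprio : ∀ s, ValidPrio (prio s)) :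
    AStable A prio q (aDA A prio q) := by
  refine ⟨?_, aDA_isMatching hA hprio, ?_⟩
  · intro i s h
    rw [aDA_eq_target hA, aTarget] at h
    obtain ⟨hlt, hEq⟩ := List.getElem?_eq_some_iff.mp h
    exact hEq ▸ List.getElem_mem _
  · rintro i s ⟨hbet, hseat⟩
    have hidx : (A i).idxOf s < daState A prio q i := by
      cases hmu : aDA A prio q i with
      | none =>
        rw [hmu] at hbet
        have hs : s ∈ A i := hbet
        rw [aDA_eq_target hA, aTarget] at hmu
        have hlen : (A i).length ≤ daState A prio q i := by
          by_contra hc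
          rw [List.getElem?_eq_getElem (by omega)] at hmu
          simp at hmu
        have := List.idxOf_lt_length_iff.mpr hs
        omega
      | some u =>
        rw [hmu] at hbet
        have hb : u ∈ A i ∧ (A i).idxOf s < (A i).idxOf u := hbet
        rw [aDA_eq_target hA, aTarget] at hmu
        obtain ⟨hlt, hEq⟩ := List.getElem?_eq_some_iff.mp hmu
        have hidxu : (A i).idxOf u = daState A prio q i := by
          rw [← hEq, List.Nodup.idxOf_getElem (hA i)]
        omega
    have hH := KinvFix hA hprio hidx
    rcases hseat with hvac | ⟨j, hj, hlt'⟩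
    · rw [aDA_fiber hA hprio] at hvac
      have h1 := hH.1
      rw [held_eq_filter hA hprio] at h1
      omega
    · have hjtar : aTarget A (daState A prio q) j = some s := by
        rw [aDA_eq_target hA] at hj
        exact hj
      have hjheld := fix_held hA hjtar
      have h2 := hH.2 j hjheld
      unfold prioLt at h2 hlt'
      omega

/-- Student-optimality of DA among stable matchings. -/
theorem aDA_opt (hA : ∀ i, (A i).Nodup) (hprio : ∀ s, ValidPrio (prio s))
    {ν : I → Option S} (hν : AStable A prio q ν) :
    ∀ i s, ν i = some s →
      ∃ m, aDA A prio q i = some m ∧ (A i).idxOf m ≤ (A i).idxOf s := by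
  have hInv : ∀ (t : ℕ) (i : I) (s : S), ν i = some s →
      ((aStep A prio q)^[t] (fun _ => 0)) i ≤ (A i).idxOf s := by
    intro t
    induction t with
    | zero => intro i s h; simp
    | succ n ih =>
      intro i s hνi
      rw [Function.iterate_succ_apply']
      rcases aStep_cases (A := A) (prio := prio) (q := q)
        ((aStep A prio q)^[n] (fun _ => 0)) i with heq | ⟨heq, t₀, ht, hni⟩
      · rw [heq]; exact ih i s hνi
      · rw [heq]
        have hle := ih i s hνi
        rcases Nat.lt_or_ge (((aStep A prio q)^[n] (fun _ => 0)) i) ((A i).idxOf s)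
          with h | h
        · omega
        exfalso
        have hidx : (A i).idxOf s = ((aStep A prio q)^[n] (fun _ => 0)) i := by omega
        obtain ⟨hlen2, hEq⟩ := List.getElem?_eq_some_iff.mp ht
        have hst : s = t₀ :=
          ((getElem_eq_of_indexOf hlen2 hidx).symm).trans hEq
        subst hst
        -- i is rejected by s even though ν i = some s
        have hiF : i ∈ (prio s).filter
            (fun j => decide (aTarget A ((aStep A prio q)^[n] (fun _ => 0)) j = some s)) :=
          (mem_filter_target hprio).mpr ht
        have hnotake : i ∉ ((prio s).filter
            (fun j => decide (aTarget A ((aStep A prio q)^[n] (fun _ => 0)) j = some s))).take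
            (q s) := fun hmem => hni (by rw [aHeld]; exact hmem)
        have hHs := Hreject (A := A) (q := q) hprio ht hni
        have hlenheld : q s ≤ (aHeld A prio q ((aStep A prio q)^[n] (fun _ => 0)) s).length
          := hHs.1
        -- find a held student not matched to s under ν
        have hexj : ∃ j ∈ aHeld A prio q ((aStep A prio q)^[n] (fun _ => 0)) s,
            ¬ ν j = some s := by
          by_contra hc
          push_neg at hc
          have hsub : insert i (aHeld A prio q ((aStep A prio q)^[n] (fun _ => 0)) s).toFinset
              ⊆ Finset.univ.filter (fun j => ν j = some s) := by
            intro x hx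
            rcases Finset.mem_insert.mp hx with rfl | hx
            · exact Finset.mem_filter.mpr ⟨Finset.mem_univ _, hνi⟩
            · exact Finset.mem_filter.mpr ⟨Finset.mem_univ _,
                hc x (List.mem_toFinset.mp hx)⟩
          have hcard := Finset.card_le_card hsub
          rw [Finset.card_insert_of_notMem (by
              rw [List.mem_toFinset]
              exact fun hmem => hni hmem),
            List.toFinset_card_of_nodup (held_nodup hprio _ _)] at hcard
          have hq := hν.2.1 s
          omega
        obtain ⟨j, hjheld, hjν⟩ := hexj
        have hjt : aTarget A ((aStep A prio q)^[n] (fun _ => 0)) j = some s :=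
          held_target hjheld
        obtain ⟨hjlt, hjEq⟩ := List.getElem?_eq_some_iff.mp hjt
        have hjidx : (A j).idxOf s = ((aStep A prio q)^[n] (fun _ => 0)) j := by
          rw [← hjEq, List.Nodup.idxOf_getElem (hA j)]
        have hbet : ABetter (A j) s (ν j) := by
          cases hνj : ν j with
          | none => exact (show s ∈ A j from hjEq ▸ List.getElem_mem _)
          | some u =>
            have hu : u ∈ A j := hν.1 j u hνj
            have hlej := ih j u hνj
            have hne : u ≠ s := fun hceq => hjν (hceq ▸ hνj)
            have hune : (A j).idxOf u ≠ ((aStep A prio q)^[n] (fun _ => 0)) j := by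
              intro hcon
              exact hne (((getElem_eq_of_indexOf (by omega) hcon).symm).trans hjEq)
            exact ⟨hu, by omega⟩
        have hplt : prioLt (prio s) j i :=
          mem_take_prioLt (hprio s).1 hiF hnotake (by rw [aHeld] at hjheld; exact hjheld)
        exact hν.2.2 j s ⟨hbet, Or.inr ⟨i, hνi, hplt⟩⟩
  intro i s hsν
  have h1 : daState A prio q i ≤ (A i).idxOf s :=
    hInv (Fintype.card I * Fintype.card S + 1) i s hsν
  have hsmem : s ∈ A i := hν.1 i s hsν
  have hslen : (A i).idxOf s < (A i).length := List.idxOf_lt_length_iff.mpr hsmem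
  have hlen : daState A prio q i < (A i).length := lt_of_le_of_lt h1 hslen
  refine ⟨(A i)[daState A prio q i], ?_, ?_⟩
  · rw [aDA_eq_target hA, aTarget, List.getElem?_eq_getElem hlen]
  · rw [List.Nodup.idxOf_getElem (hA i)]
    exact h1

lemma aDA_none_of (hA : ∀ i, (A i).Nodup) (hprio : ∀ s, ValidPrio (prio s))
    {ν : I → Option S} (hν : AStable A prio q ν) {i : I}
    (h : aDA A prio q i = none) : ν i = none := by
  cases hνi : ν i with
  | none => rfl
  | some s =>
    obtain ⟨m, hm, _⟩ := aDA_opt hA hprio hν i s hνi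
    rw [h] at hm
    exact absurd hm (by simp)

lemma fiber_card_le (hA : ∀ i, (A i).Nodup) (hprio : ∀ s, ValidPrio (prio s))
    {ν : I → Option S} (hν : AStable A prio q ν) (o : Option S) :
    (Finset.univ.filter (fun j => aDA A prio q j = o)).card ≤
      (Finset.univ.filter (fun j => ν j = o)).card := by
  cases o with
  | none =>
    apply Finset.card_le_card
    intro j hj
    rw [Finset.mem_filter] at *
    exact ⟨Finset.mem_univ _, aDA_none_of hA hprio hν hj.2⟩
  | some s =>
    by_contra hc
    push_neg at hc
    have hnsub : ¬ (Finset.univ.filter (fun j => aDA A prio q j = some s)) ⊆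
        (Finset.univ.filter (fun j => ν j = some s)) := by
      intro hsub
      exact absurd (Finset.card_le_card hsub) (by omega)
    obtain ⟨j, hjμ, hjν⟩ := Finset.not_subset.mp hnsub
    rw [Finset.mem_filter] at hjμ
    have hjμ2 : aDA A prio q j = some s := hjμ.2
    have hjν2 : ¬ ν j = some s := fun hcc =>
      hjν (Finset.mem_filter.mpr ⟨Finset.mem_univ _, hcc⟩)
    have hsmem : s ∈ A j := (aDA_stable hA hprio).1 j s hjμ2
    have hbet : ABetter (A j) s (ν j) := by
      cases hνj : ν j with
      | none => exact hsmem
      | some u =>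
        obtain ⟨m, hm, hmle⟩ := aDA_opt hA hprio hν j u hνj
        rw [hjμ2] at hm
        have hms : m = s := by injection hm.symm
        subst hms
        have hu : u ∈ A j := hν.1 j u hνj
        have hne : m ≠ u := fun hceq => hjν2 (by rw [hνj, hceq])
        have := List.idxOf_inj (y := u) hsmem
        exact ⟨hu, lt_of_le_of_ne hmle (fun hcc => hne (this.mp hcc))⟩
    have hvac : (Finset.univ.filter (fun j => ν j = some s)).card < q s :=
      lt_of_lt_of_le hc ((aDA_isMatching hA hprio) s)
    exact hν.2.2 j s ⟨hbet, Or.inl hvac⟩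

lemma fiber_card_eq (hA : ∀ i, (A i).Nodup) (hprio : ∀ s, ValidPrio (prio s))
    {ν : I → Option S} (hν : AStable A prio q ν) (o : Option S) :
    (Finset.univ.filter (fun j => aDA A prio q j = o)).card =
      (Finset.univ.filter (fun j => ν j = o)).card := by
  have hsum1 : (Finset.univ : Finset I).card =
      ∑ o : Option S, (Finset.univ.filter (fun j => aDA A prio q j = o)).card :=
    Finset.card_eq_sum_card_fiberwise (fun x _ => Finset.mem_univ _)
  have hsum2 : (Finset.univ : Finset I).card =
      ∑ o : Option S, (Finset.univ.filter (fun j => ν j = o)).card :=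
    Finset.card_eq_sum_card_fiberwise (fun x _ => Finset.mem_univ _)
  have hle : ∀ o ∈ (Finset.univ : Finset (Option S)),
      (Finset.univ.filter (fun j => aDA A prio q j = o)).card ≤
      (Finset.univ.filter (fun j => ν j = o)).card :=
    fun o _ => fiber_card_le hA hprio hν o
  exact (Finset.sum_eq_sum_iff_of_le hle).mp (by omega) o (Finset.mem_univ _)

/-- Rural hospitals: all stable matchings match the same students. -/
theorem aDA_matchedIff (hA : ∀ i, (A i).Nodup) (hprio : ∀ s, ValidPrio (prio s))
    {ν : I → Option S} (hν : AStable A prio q ν) (i : I) :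
    ν i = none ↔ aDA A prio q i = none := by
  constructor
  · intro h
    have hcard := fiber_card_eq hA hprio hν (none : Option S)
    have hsub : (Finset.univ.filter (fun j => aDA A prio q j = (none : Option S))) ⊆
        (Finset.univ.filter (fun j => ν j = (none : Option S))) := by
      intro j hj
      rw [Finset.mem_filter] at *
      exact ⟨Finset.mem_univ _, aDA_none_of hA hprio hν hj.2⟩
    have heq := Finset.eq_of_subset_of_card_le hsub (by omega)
    have : i ∈ Finset.univ.filter (fun j => ν j = (none : Option S)) :=
      Finset.mem_filter.mpr ⟨Finset.mem_univ _, h⟩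
    rw [← heq, Finset.mem_filter] at this
    exact this.2
  · exact aDA_none_of hA hprio hν

end DAInvariants

section Bridge

lemma takeWhile_append_cons {α : Type*} (pred : α → Bool) (l : List α) (x : α) (r : List α)
    (hl : ∀ y ∈ l, pred y) (hx : pred x = false) :
    (l ++ x :: r).takeWhile pred = l := by
  induction l with
  | nil => simp [List.takeWhile_cons, hx]
  | cons a t ih =>
    rw [List.cons_append, List.takeWhile_cons, hl a (by simp)]
    rw [ih (fun y hy => hl y (by simp [hy]))]
    simp

lemma acceptables_truncate (p : List (Option S)) (k : ℕ) :
    acceptables (truncate p k) = (acceptables p).take k := by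
  rw [truncate, acceptables, takeWhile_append_cons _ _ _ _
    (by intro y hy; obtain ⟨z, -, rfl⟩ := List.mem_map.mp hy; rfl) (by simp)]
  rw [List.filterMap_map]
  have : (id ∘ some : S → Option S) = some := rfl
  rw [this, List.filterMap_some]

lemma GSk_eq_aDA (k : ℕ) (P : I → List (Option S)) (prio : S → List I) (q : S → ℕ) :
    GSk k P prio q = aDA (fun i => (acceptables (P i)).take k) prio q := by
  have hAA : (fun i => acceptables (truncate (P i) k)) =
      (fun i => (acceptables (P i)).take k) :=
    funext fun i => acceptables_truncate (P i) k
  rw [GSk, GS_eq_aDA, hAA]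

lemma mem_take_iff_indexOf {α : Type*} [DecidableEq α] {l : List α} {x : α} {n : ℕ} :
    x ∈ l.take n ↔ x ∈ l ∧ l.idxOf x < n :=
  ⟨fun h => ⟨(List.take_sublist _ _).subset h, indexOf_lt_of_mem_take h⟩,
   fun h => mem_take_of_indexOf h.1 h.2⟩

lemma ABetter_take_imp {l : List S} {a : ℕ} {s : S} {o : Option S}
    (h : ABetter (l.take a) s o) : ABetter l s o := by
  cases o with
  | none => exact (List.take_sublist _ _).subset (show s ∈ l.take a from h)
  | some u =>
    obtain ⟨hu, hidx⟩ := (h : u ∈ l.take a ∧ (l.take a).idxOf s < (l.take a).idxOf u)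
    have hs : s ∈ l.take a := by
      rw [← List.idxOf_lt_length_iff]
      calc (l.take a).idxOf s < (l.take a).idxOf u := hidx
        _ < (l.take a).length := List.idxOf_lt_length_iff.mpr hu
    refine ⟨(List.take_sublist _ _).subset hu, ?_⟩
    rw [← indexOf_take_eq hs, ← indexOf_take_eq hu]
    exact hidx

lemma ABetter_take_mono {l : List S} {a b : ℕ} (hab : a ≤ b) {s : S} {o : Option S}
    (h : ABetter (l.take a) s o) : ABetter (l.take b) s o := by
  cases o with
  | none =>
    have hs := mem_take_iff_indexOf.mp (h : s ∈ l.take a)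
    exact (show s ∈ l.take b from mem_take_iff_indexOf.mpr ⟨hs.1, by omega⟩)
  | some u =>
    obtain ⟨hu, hidx⟩ := (h : u ∈ l.take a ∧ (l.take a).idxOf s < (l.take a).idxOf u)
    have hs : s ∈ l.take a := by
      rw [← List.idxOf_lt_length_iff]
      calc (l.take a).idxOf s < (l.take a).idxOf u := hidx
        _ < (l.take a).length := List.idxOf_lt_length_iff.mpr hu
    have hu2 := mem_take_iff_indexOf.mp hu
    have hs2 := mem_take_iff_indexOf.mp hs
    have hu' : u ∈ l.take b := mem_take_iff_indexOf.mpr ⟨hu2.1, by omega⟩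
    have hs' : s ∈ l.take b := mem_take_iff_indexOf.mpr ⟨hs2.1, by omega⟩
    refine ⟨hu', ?_⟩
    rw [indexOf_take_eq hs', indexOf_take_eq hu']
    rw [indexOf_take_eq hs, indexOf_take_eq hu] at hidx
    exact hidx

lemma ABetter_some_to_take {l : List S} {a : ℕ} {s u : S} (hu : u ∈ l.take a)
    (h : ABetter l s (some u)) : ABetter (l.take a) s (some u) := by
  obtain ⟨humem, hidx⟩ := (h : u ∈ l ∧ l.idxOf s < l.idxOf u)
  have hu2 := mem_take_iff_indexOf.mp hu
  have hs : s ∈ l.take a := by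
    refine mem_take_iff_indexOf.mpr ⟨?_, by omega⟩
    rw [← List.idxOf_lt_length_iff]
    calc l.idxOf s < l.idxOf u := hidx
      _ < l.length := List.idxOf_lt_length_iff.mpr humem
  exact ⟨hu, by rw [indexOf_take_eq hs, indexOf_take_eq hu]; exact hidx⟩

lemma valid_mem_of_not_prefLt {p : List (Option S)} (hp : ValidPref p) {u : S}
    (h : ¬ prefLt p none (some u)) : u ∈ acceptables p := by
  have hu : (some u) ∈ p := hp.2 (some u)
  have hn : (none : Option S) ∈ p := hp.2 none
  unfold prefLt at h
  have hne : p.idxOf (some u) ≠ p.idxOf (none : Option S) := by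
    intro hc
    exact absurd (bidx_inj hu hn hc) (by simp)
  rw [mem_acceptables_iff_indexOf hp]
  omega

lemma ABetter_iff_prefLt {p : List (Option S)} (hp : ValidPref p) {s : S} {o : Option S}
    (ho : ∀ u, o = some u → u ∈ acceptables p) :
    ABetter (acceptables p) s o ↔ prefLt p (some s) o := by
  cases o with
  | none =>
    show s ∈ acceptables p ↔ _
    rw [mem_acceptables_iff_indexOf hp]
    rfl
  | some u =>
    have hu := ho u rfl
    show u ∈ acceptables p ∧ (acceptables p).idxOf s < (acceptables p).idxOf u ↔ _
    unfold prefLt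
    constructor
    · rintro ⟨-, hidx⟩
      have hs : s ∈ acceptables p := by
        rw [← List.idxOf_lt_length_iff]
        calc (acceptables p).idxOf s < (acceptables p).idxOf u := hidx
          _ < (acceptables p).length := List.idxOf_lt_length_iff.mpr hu
      rw [indexOf_some_eq hs, indexOf_some_eq hu]
      exact hidx
    · intro hidx
      have hs : s ∈ acceptables p := by
        rw [mem_acceptables_iff_indexOf hp]
        calc p.idxOf (some s) < p.idxOf (some u) := hidx
          _ < p.idxOf (none : Option S) := (mem_acceptables_iff_indexOf hp).mp hu
      refine ⟨hu, ?_⟩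
      rw [indexOf_some_eq hs, indexOf_some_eq hu] at hidx
      exact hidx

lemma isStable_iff_AStable {P : I → List (Option S)} {prio : S → List I} {q : S → ℕ}
    (hP : ∀ i, ValidPref (P i)) {μ : I → Option S} (hmat : IsMatching q μ) :
    IsStable P prio q μ ↔ AStable (fun i => acceptables (P i)) prio q μ := by
  constructor
  · rintro ⟨hIR, hBl⟩
    have hAIR : ∀ i u, μ i = some u → u ∈ acceptables (P i) := by
      intro i u hu
      exact valid_mem_of_not_prefLt (hP i) (by rw [← hu]; exact hIR i)
    refine ⟨hAIR, hmat, ?_⟩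
    rintro i s ⟨hbet, hseat⟩
    exact hBl i ⟨s, (ABetter_iff_prefLt (hP i) (hAIR i)).mp hbet, hseat⟩
  · rintro ⟨hAIR, -, hBl⟩
    constructor
    · intro i
      cases hμi : μ i with
      | none => unfold prefLt; omega
      | some u =>
        have hu := hAIR i u hμi
        rw [mem_acceptables_iff_indexOf (hP i)] at hu
        unfold prefLt
        omega
    · rintro i ⟨s, hpl, hseat⟩
      exact hBl i s ⟨(ABetter_iff_prefLt (hP i) (hAIR i)).mpr hpl, hseat⟩

end Bridge

section Pieces

variable {P : I → List (Option S)} {prio : S → List I} {q : S → ℕ}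

lemma take_nodup {l : List S} (h : l.Nodup) (n : ℕ) : (l.take n).Nodup :=
  (List.take_sublist _ _).nodup h

/-- Piece C: if `GS^l` is stable at `P` then `GS^k = GS^l` for every `k ≥ l`. -/
lemma gsk_eq_of_stable_le (hP : ∀ i, ValidPref (P i)) (hprio : ∀ s, ValidPrio (prio s))
    {l k : ℕ} (hlk : l ≤ k) (hst : IsStable P prio q (GSk l P prio q)) :
    GSk k P prio q = GSk l P prio q := by
  have hAl : ∀ i, ((acceptables (P i)).take l).Nodup :=
    fun i => take_nodup (acceptables_nodup (hP i).1) l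
  have hAk : ∀ i, ((acceptables (P i)).take k).Nodup :=
    fun i => take_nodup (acceptables_nodup (hP i).1) k
  rw [GSk_eq_aDA] at hst
  rw [GSk_eq_aDA (k := k), GSk_eq_aDA (k := l)]
  set μ := aDA (fun i => (acceptables (P i)).take l) prio q with hμdef
  set μ' := aDA (fun i => (acceptables (P i)).take k) prio q with hμ'def
  have hμA := aDA_stable (A := fun i => (acceptables (P i)).take l) (q := q) hAl hprio
  have hμ'A := aDA_stable (A := fun i => (acceptables (P i)).take k) (q := q) hAk hprio
  have hμmat : IsMatching q μ := hμA.2.1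
  have hμAacc : AStable (fun i => acceptables (P i)) prio q μ :=
    (isStable_iff_AStable hP hμmat).mp hst
  -- μ is stable w.r.t. the k-truncated profile
  have hμAk : AStable (fun i => (acceptables (P i)).take k) prio q μ := by
    refine ⟨?_, hμmat, ?_⟩
    · intro i u h
      have h1 := mem_take_iff_indexOf.mp (hμA.1 i u h)
      exact mem_take_iff_indexOf.mpr ⟨h1.1, by omega⟩
    · rintro i s ⟨hbet, hseat⟩
      exact hμAacc.2.2 i s ⟨ABetter_take_imp hbet, hseat⟩
  have hopt := aDA_opt hAk hprio hμAk
  have hmatched := aDA_matchedIff hAk hprio hμAk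
  rw [← hμ'def] at hopt hmatched
  -- μ' is stable w.r.t. the l-truncated profile
  have hμ'AIRl : ∀ i m, μ' i = some m → m ∈ (acceptables (P i)).take l := by
    intro i m hm
    have hμi : ¬ μ i = none := by
      intro hc
      rw [(hmatched i).mp hc] at hm
      exact absurd hm (by simp)
    cases hμi2 : μ i with
    | none => exact absurd hμi2 hμi
    | some s =>
      obtain ⟨m', hm', hidx⟩ := hopt i s hμi2
      rw [hm] at hm'
      have hmm : m = m' := by injection hm'
      subst hmm
      have hsAl : s ∈ (acceptables (P i)).take l := hμA.1 i s hμi2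
      have hsacc := mem_take_iff_indexOf.mp hsAl
      have hsAk : s ∈ (acceptables (P i)).take k :=
        mem_take_iff_indexOf.mpr ⟨hsacc.1, by omega⟩
      have hmAk : m ∈ (acceptables (P i)).take k := hμ'A.1 i m hm
      have hmacc := mem_take_iff_indexOf.mp hmAk
      rw [indexOf_take_eq hmAk, indexOf_take_eq hsAk] at hidx
      exact mem_take_iff_indexOf.mpr ⟨hmacc.1, by omega⟩
  have hμ'Al : AStable (fun i => (acceptables (P i)).take l) prio q μ' := by
    refine ⟨hμ'AIRl, hμ'A.2.1, ?_⟩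
    rintro i s ⟨hbet, hseat⟩
    exact hμ'A.2.2 i s ⟨ABetter_take_mono hlk hbet, hseat⟩
  have hopt2 := aDA_opt hAl hprio hμ'Al
  funext i
  cases hμi : μ i with
  | none =>
    rw [(hmatched i).mp hμi]
  | some s =>
    obtain ⟨m, hm, hidx⟩ := hopt i s hμi
    obtain ⟨v, hv, hidx2⟩ := hopt2 i m hm
    have hv2 : μ i = some v := hv
    rw [hμi] at hv2
    have hvs : s = v := by injection hv2
    subst hvs
    -- transfer indices to the untruncated list and conclude m = s
    have hsAl : s ∈ (acceptables (P i)).take l := hμA.1 i s hμi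
    have hmAl : m ∈ (acceptables (P i)).take l := hμ'AIRl i m hm
    have hsacc := mem_take_iff_indexOf.mp hsAl
    have hmacc := mem_take_iff_indexOf.mp hmAl
    have hsAk : s ∈ (acceptables (P i)).take k :=
      mem_take_iff_indexOf.mpr ⟨hsacc.1, by omega⟩
    have hmAk : m ∈ (acceptables (P i)).take k :=
      mem_take_iff_indexOf.mpr ⟨hmacc.1, by omega⟩
    rw [indexOf_take_eq hmAk, indexOf_take_eq hsAk] at hidx
    rw [indexOf_take_eq hsAl, indexOf_take_eq hmAl] at hidx2
    have hms : m = s :=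
      List.idxOf_inj (y := s) hmacc.1 |>.mp (by omega)
    rw [hm, hms]

/-- Piece D: if `GS^k(P)` is stable at `P` then `GS^k` is not manipulable at `P`. -/
theorem gsk_not_manipulable (hP : ∀ i, ValidPref (P i)) (hprio : ∀ s, ValidPrio (prio s))
    {k : ℕ} (hst : IsStable P prio q (GSk k P prio q)) :
    NotManipulable (fun R => GSk k R prio q) P := by
  rintro i ⟨Q, hQ, hman⟩
  simp only at hman
  have hAk : ∀ j, ((acceptables (P j)).take k).Nodup :=
    fun j => take_nodup (acceptables_nodup (hP j).1) k
  rw [GSk_eq_aDA] at hst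
  rw [GSk_eq_aDA, GSk_eq_aDA] at hman
  set Ak : I → List S := fun j => (acceptables (P j)).take k with hAkdef
  set C : I → List S :=
    fun j => (acceptables ((Function.update P i Q) j)).take k with hCdef
  set μ := aDA Ak prio q with hμdef
  set ν := aDA C prio q with hνdef
  have hCnodup : ∀ j, (C j).Nodup := by
    intro j
    rcases eq_or_ne i j with heq | hne
    · subst heq
      rw [hCdef]
      simp only [Function.update_self]
      exact take_nodup (acceptables_nodup hQ.1) k
    · rw [hCdef]
      simp only [Function.update_of_ne (Ne.symm hne)]
      exact hAk j
  have hCj : ∀ j, j ≠ i → C j = Ak j := by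
    intro j hne
    rw [hCdef]
    simp only [Function.update_of_ne hne]
    rfl
  have hμA := aDA_stable (A := Ak) (q := q) hAk hprio
  have hνC := aDA_stable (A := C) (q := q) hCnodup hprio
  -- the outcome of the manipulation
  have hνi : ∃ s, ν i = some s := by
    cases hν : ν i with
    | some s => exact ⟨s, rfl⟩
    | none =>
      rw [hν] at hman
      cases hμ : μ i with
      | none => rw [hμ] at hman; unfold prefLt at hman; omega
      | some u =>
        rw [hμ] at hman
        exact absurd (hμ ▸ hman) (hst.1 i)
  obtain ⟨s, hνis⟩ := hνi
  rw [hνis] at hman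
  -- s is truly acceptable to i and better than μ i
  have hsacc : s ∈ acceptables (P i) := by
    cases hμ : μ i with
    | none =>
      rw [hμ] at hman
      exact (mem_acceptables_iff_indexOf (hP i)).mpr hman
    | some u =>
      rw [hμ] at hman
      have hu : u ∈ acceptables (P i) :=
        valid_mem_of_not_prefLt (hP i) (by rw [← hμ]; exact hst.1 i)
      rw [mem_acceptables_iff_indexOf (hP i)]
      have := (mem_acceptables_iff_indexOf (hP i)).mp hu
      unfold prefLt at hman
      omega
  -- profile where i lists only s
  set D : I → List S := Function.update Ak i [s] with hDdef
  have hDi : D i = [s] := by rw [hDdef]; simp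
  have hDj : ∀ j, j ≠ i → D j = Ak j := by
    intro j hne
    rw [hDdef]
    simp only [Function.update_of_ne hne]
  have hDnodup : ∀ j, (D j).Nodup := by
    intro j
    rcases eq_or_ne i j with heq | hne
    · subst heq; rw [hDi]; simp
    · rw [hDj j (Ne.symm hne)]; exact hAk j
  have hνD : AStable D prio q ν := by
    refine ⟨?_, hνC.2.1, ?_⟩
    · intro j u hu
      rcases eq_or_ne i j with heq | hne
      · subst heq
        rw [hνis] at hu
        have hus : s = u := by injection hu
        rw [hDi]
        exact List.mem_singleton.mpr hus.symm
      · rw [hDj j (Ne.symm hne), ← hCj j (Ne.symm hne)]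
        exact hνC.1 j u hu
    · rintro j t ⟨hbet, hseat⟩
      rcases eq_or_ne i j with heq | hne
      · subst heq
        rw [hDi, hνis] at hbet
        obtain ⟨-, hidx⟩ := (hbet : s ∈ [s] ∧ ([s]).idxOf t < ([s]).idxOf s)
        rw [List.idxOf_cons_self] at hidx
        omega
      · rw [hDj j (Ne.symm hne), ← hCj j (Ne.symm hne)] at hbet
        exact hνC.2.2 j t ⟨hbet, hseat⟩
  cases hμi : μ i with
  | none =>
    -- unmatched case: μ itself is stable at the profile D
    have hμD : AStable D prio q μ := by
      refine ⟨?_, hμA.2.1, ?_⟩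
      · intro j u hu
        rcases eq_or_ne i j with heq | hne
        · subst heq
          rw [hμi] at hu
          exact absurd hu (by simp)
        · rw [hDj j (Ne.symm hne)]
          exact hμA.1 j u hu
      · rintro j t ⟨hbet, hseat⟩
        rcases eq_or_ne i j with heq | hne
        · subst heq
          rw [hDi, hμi] at hbet
          have hts : t = s := List.mem_singleton.mp hbet
          subst hts
          refine hst.2 i ⟨t, ?_, hseat⟩
          rw [hμi]
          exact (mem_acceptables_iff_indexOf (hP i)).mp hsacc
        · rw [hDj j (Ne.symm hne)] at hbet
          exact hμA.2.2 j t ⟨hbet, hseat⟩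
    have h1 := (aDA_matchedIff hDnodup hprio hνD i).mpr
      ((aDA_matchedIff hDnodup hprio hμD i).mp hμi)
    rw [hνis] at h1
    exact absurd h1 (by simp)
  | some u =>
    -- matched case
    have hu_acc : u ∈ acceptables (P i) :=
      valid_mem_of_not_prefLt (hP i) (by rw [← hμi]; exact hst.1 i)
    have hu_Ak : u ∈ Ak i := hμA.1 i u hμi
    have hidxu : (acceptables (P i)).idxOf u < k := (mem_take_iff_indexOf.mp hu_Ak).2
    have hidxsu : (acceptables (P i)).idxOf s < (acceptables (P i)).idxOf u := by
      rw [hμi] at hman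
      unfold prefLt at hman
      rw [indexOf_some_eq hsacc, indexOf_some_eq hu_acc] at hman
      exact hman
    set r := (acceptables (P i)).idxOf s with hrdef
    have hrk : r < k := by omega
    set Epro : I → List S := Function.update Ak i ((acceptables (P i)).take (r + 1))
      with hEdef
    have hEi : Epro i = (acceptables (P i)).take (r + 1) := by rw [hEdef]; simp
    have hEj : ∀ j, j ≠ i → Epro j = Ak j := by
      intro j hne
      rw [hEdef]
      simp only [Function.update_of_ne hne]
    have hEnodup : ∀ j, (Epro j).Nodup := by
      intro j
      rcases eq_or_ne i j with heq | hne
      · subst heq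
        rw [hEi]
        exact take_nodup (acceptables_nodup (hP i).1) _
      · rw [hEj j (Ne.symm hne)]; exact hAk j
    have hs_E : s ∈ (acceptables (P i)).take (r + 1) :=
      mem_take_iff_indexOf.mpr ⟨hsacc, by omega⟩
    set π := aDA Epro prio q with hπdef
    have hπA := aDA_stable (A := Epro) (q := q) hEnodup hprio
    rw [← hπdef] at hπA
    cases hπi : π i with
    | none =>
      -- π is stable at profile D as well
      have hπD : AStable D prio q π := by
        refine ⟨?_, hπA.2.1, ?_⟩
        · intro j u' hu'
          rcases eq_or_ne i j with heq | hne
          · subst heq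
            rw [hπi] at hu'
            exact absurd hu' (by simp)
          · rw [hDj j (Ne.symm hne), ← hEj j (Ne.symm hne)]
            exact hπA.1 j u' hu'
        · rintro j t ⟨hbet, hseat⟩
          rcases eq_or_ne i j with heq | hne
          · subst heq
            rw [hDi, hπi] at hbet
            have hts : t = s := List.mem_singleton.mp hbet
            subst hts
            refine hπA.2.2 i t ⟨?_, hseat⟩
            rw [hEi, hπi]
            exact hs_E
          · rw [hDj j (Ne.symm hne), ← hEj j (Ne.symm hne)] at hbet
            exact hπA.2.2 j t ⟨hbet, hseat⟩
      have h1 := (aDA_matchedIff hDnodup hprio hνD i).mpr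
        ((aDA_matchedIff hDnodup hprio hπD i).mp hπi)
      rw [hνis] at h1
      exact absurd h1 (by simp)
    | some t =>
      have ht_E : t ∈ (acceptables (P i)).take (r + 1) := by
        have h0 := hπA.1 i t hπi
        rwa [hEi] at h0
      have ht_acc := mem_take_iff_indexOf.mp ht_E
      have ht_Ak : t ∈ Ak i := mem_take_iff_indexOf.mpr ⟨ht_acc.1, by omega⟩
      -- π is stable w.r.t. the k-truncated profile
      have hπAk : AStable Ak prio q π := by
        refine ⟨?_, hπA.2.1, ?_⟩
        · intro j u' hu'
          rcases eq_or_ne i j with heq | hne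
          · subst heq
            rw [hπi] at hu'
            have h2 : t = u' := by injection hu'
            exact h2 ▸ ht_Ak
          · have h0 := hπA.1 j u' hu'
            rwa [hEj j (Ne.symm hne)] at h0
        · rintro j t' ⟨hbet, hseat⟩
          rcases eq_or_ne i j with heq | hne
          · subst heq
            rw [hπi] at hbet
            have hbacc : ABetter (acceptables (P i)) t' (some t) := ABetter_take_imp hbet
            refine hπA.2.2 i t' ⟨?_, hseat⟩
            rw [hEi, hπi]
            exact ABetter_some_to_take ht_E hbacc
          · refine hπA.2.2 j t' ⟨?_, hseat⟩
            rwa [hEj j (Ne.symm hne)]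
      obtain ⟨m, hm, hidxm⟩ := aDA_opt hAk hprio hπAk i t hπi
      have hm2 : μ i = some m := hm
      rw [hμi] at hm2
      have hmu : u = m := by injection hm2
      subst hmu
      rw [indexOf_take_eq hu_Ak, indexOf_take_eq ht_Ak] at hidxm
      omega

end Pieces

section BostonTheory

variable {P' : I → List (Option S)} {prio : S → List I} {q : S → ℕ}

/-- Boston state after `t` rounds. -/
def bSt (P' : I → List (Option S)) (prio : S → List I) (q : S → ℕ) (t : ℕ) :
    I → Option S :=
  (List.range t).foldl (bostonRound P' prio q) (fun _ => none)

lemma bSt_zero : bSt P' prio q 0 = (fun _ => none) := rfl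

lemma bSt_succ (t : ℕ) :
    bSt P' prio q (t + 1) = bostonRound P' prio q (bSt P' prio q t) t := by
  rw [bSt, List.range_succ, List.foldl_append]
  rfl

lemma Boston_eq_bSt : Boston P' prio q = bSt P' prio q (Fintype.card S) := rfl

/-- The list of new applicants to `s` at round `t`. -/
def bApp (P' : I → List (Option S)) (prio : S → List I) (μ : I → Option S) (t : ℕ)
    (s : S) : List I :=
  (prio s).filter (fun j => decide (μ j = none ∧ (acceptables (P' j))[t]? = some s))

lemma round_eq_some {μ : I → Option S} {t : ℕ} {s : S} {j : I} :
    bostonRound P' prio q μ t j = some s ↔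
      μ j = some s ∨ (μ j = none ∧ (acceptables (P' j))[t]? = some s ∧
        j ∈ (bApp P' prio μ t s).take
          (q s - (Finset.univ.filter (fun j' => μ j' = some s)).card)) := by
  unfold bostonRound bApp
  cases hμj : μ j with
  | some u => simp [hμj]
  | none =>
    cases htj : (acceptables (P' j))[t]? with
    | none => simp [hμj, htj]
    | some s' =>
      simp only [hμj, htj]
      split <;> rename_i hmem
      · constructor
        · intro h
          have h2 : s' = s := by injection h
          subst h2
          refine Or.inr ⟨?_, ?_, hmem⟩ <;> trivial
        · rintro (hcon | ⟨-, hEq, -⟩)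
          · exact absurd hcon (by simp)
          · exact hEq
      · constructor
        · intro hcon
          exact absurd hcon (by simp)
        · rintro (hcon | ⟨-, hEq, hmem2⟩)
          · exact absurd hcon (by simp)
          · have h2 : s' = s := by injection hEq
            subst h2
            exact absurd hmem2 hmem

lemma bSt_persist {t : ℕ} {j : I} {s : S} (h : bSt P' prio q t j = some s) :
    ∀ {t'}, t ≤ t' → bSt P' prio q t' j = some s := by
  intro t' htt
  induction t' with
  | zero =>
    have : t = 0 := by omega
    subst this
    exact h
  | succ n ih =>
    rcases Nat.lt_or_ge t (n + 1) with hlt | hge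
    · have hn := ih (by omega)
      rw [bSt_succ]
      exact round_eq_some.mpr (Or.inl hn)
    · have : t = n + 1 := by omega
      subst this
      exact h

lemma bSt_mem {t : ℕ} {j : I} {s : S} (hB : ∀ i, (acceptables (P' i)).Nodup)
    (h : bSt P' prio q t j = some s) :
    s ∈ acceptables (P' j) ∧ (acceptables (P' j)).idxOf s < t := by
  induction t with
  | zero => simp [bSt_zero] at h
  | succ n ih =>
    rw [bSt_succ] at h
    rcases round_eq_some.mp h with h1 | ⟨-, h2, -⟩
    · obtain ⟨hm, hidx⟩ := ih h1
      exact ⟨hm, by omega⟩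
    · obtain ⟨hlt, hEq⟩ := List.getElem?_eq_some_iff.mp h2
      refine ⟨hEq ▸ List.getElem_mem _, ?_⟩
      rw [← hEq, List.Nodup.idxOf_getElem (hB j)]
      omega

lemma bApp_nodup (hprio : ∀ s, ValidPrio (prio s)) (μ : I → Option S) (t : ℕ) (s : S) :
    (bApp P' prio μ t s).Nodup := (hprio s).1.filter _

lemma bFiber_succ (hprio : ∀ s, ValidPrio (prio s)) (t : ℕ) (s : S) :
    (Finset.univ.filter (fun j => bSt P' prio q (t + 1) j = some s)) =
      (Finset.univ.filter (fun j => bSt P' prio q t j = some s)) ∪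
      ((bApp P' prio (bSt P' prio q t) t s).take
        (q s - (Finset.univ.filter (fun j' => bSt P' prio q t j' = some s)).card)).toFinset
      := by
  ext j
  rw [Finset.mem_union, Finset.mem_filter, Finset.mem_filter, List.mem_toFinset,
    bSt_succ, round_eq_some]
  constructor
  · rintro ⟨-, h1 | ⟨-, -, h3⟩⟩
    · exact Or.inl ⟨Finset.mem_univ _, h1⟩
    · exact Or.inr h3
  · rintro (⟨-, h1⟩ | h2)
    · exact ⟨Finset.mem_univ _, Or.inl h1⟩
    · refine ⟨Finset.mem_univ _, Or.inr ?_⟩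
      have hmem := (List.take_sublist _ _).subset h2
      rw [bApp, List.mem_filter] at hmem
      have := hmem.2
      simp only [decide_eq_true_eq] at this
      exact ⟨this.1, this.2, h2⟩

lemma bFiber_card_succ (hprio : ∀ s, ValidPrio (prio s)) (t : ℕ) (s : S) :
    (Finset.univ.filter (fun j => bSt P' prio q (t + 1) j = some s)).card =
      (Finset.univ.filter (fun j => bSt P' prio q t j = some s)).card +
      ((bApp P' prio (bSt P' prio q t) t s).take
        (q s - (Finset.univ.filter (fun j' => bSt P' prio q t j' = some s)).card)).length
      := by
  rw [bFiber_succ hprio]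
  rw [Finset.card_union_of_disjoint]
  · congr 1
    exact List.toFinset_card_of_nodup ((List.take_sublist _ _).nodup
      (bApp_nodup hprio _ _ _))
  · rw [Finset.disjoint_left]
    intro j hj hj2
    rw [Finset.mem_filter] at hj
    rw [List.mem_toFinset] at hj2
    have hmem := (List.take_sublist _ _).subset hj2
    rw [bApp, List.mem_filter] at hmem
    have h2 := hmem.2
    simp only [decide_eq_true_eq] at h2
    rw [hj.2] at h2
    exact absurd h2.1 (by simp)

lemma bFiber_card_le (hprio : ∀ s, ValidPrio (prio s)) (t : ℕ) (s : S) :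
    (Finset.univ.filter (fun j => bSt P' prio q t j = some s)).card ≤ q s := by
  induction t with
  | zero =>
    rw [show bSt P' prio q 0 = (fun _ => none) from rfl]
    simp
  | succ n ih =>
    rw [bFiber_card_succ hprio]
    have := List.length_take_le
      (q s - (Finset.univ.filter (fun j' => bSt P' prio q n j' = some s)).card)
      (bApp P' prio (bSt P' prio q n) n s)
    omega

lemma bFiber_full_persist (hprio : ∀ s, ValidPrio (prio s)) {t : ℕ} {s : S}
    (h : (Finset.univ.filter (fun j => bSt P' prio q t j = some s)).card = q s) :
    ∀ {t'}, t ≤ t' →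
      (Finset.univ.filter (fun j => bSt P' prio q t' j = some s)).card = q s := by
  intro t' htt
  induction t' with
  | zero =>
    have : t = 0 := by omega
    subst this
    exact h
  | succ n ih =>
    rcases Nat.lt_or_ge t (n + 1) with hlt | hge
    · have hn := ih (by omega)
      have hsub : (Finset.univ.filter (fun j => bSt P' prio q n j = some s)) ⊆
          (Finset.univ.filter (fun j => bSt P' prio q (n + 1) j = some s)) := by
        intro j hj
        rw [Finset.mem_filter] at *
        exact ⟨Finset.mem_univ _, bSt_persist hj.2 (by omega)⟩
      have h1 := Finset.card_le_card hsub
      have h2 := bFiber_card_le (P' := P') (q := q) hprio (n + 1) s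
      omega
    · have : t = n + 1 := by omega
      subst this
      exact h

lemma bReject_full (hprio : ∀ s, ValidPrio (prio s)) {t : ℕ} {i : I} {s : S}
    (h0 : bSt P' prio q t i = none) (h1 : (acceptables (P' i))[t]? = some s)
    (h2 : ¬ bSt P' prio q (t + 1) i = some s) :
    (Finset.univ.filter (fun j => bSt P' prio q (t + 1) j = some s)).card = q s := by
  have hiApp : i ∈ bApp P' prio (bSt P' prio q t) t s := by
    rw [bApp, List.mem_filter]
    exact ⟨(hprio s).2 i, by simp [h0, h1]⟩
  have hnottake : i ∉ (bApp P' prio (bSt P' prio q t) t s).take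
      (q s - (Finset.univ.filter (fun j' => bSt P' prio q t j' = some s)).card) := by
    intro hc
    exact h2 (by rw [bSt_succ]; exact round_eq_some.mpr (Or.inr ⟨h0, h1, hc⟩))
  set c := (Finset.univ.filter (fun j' => bSt P' prio q t j' = some s)).card with hc
  have hidx : q s - c ≤ (bApp P' prio (bSt P' prio q t) t s).idxOf i := by
    by_contra hcon
    exact hnottake (mem_take_of_indexOf hiApp (by omega))
  have hlen : (bApp P' prio (bSt P' prio q t) t s).idxOf i <
      (bApp P' prio (bSt P' prio q t) t s).length := List.idxOf_lt_length_iff.mpr hiApp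
  have hcle : c ≤ q s := bFiber_card_le hprio t s
  rw [bFiber_card_succ hprio, List.length_take]
  omega

lemma boston_accept_round {j : I} {s : S} (h : Boston P' prio q j = some s) :
    ∃ t, t < Fintype.card S ∧ bSt P' prio q t j = none ∧
      bSt P' prio q (t + 1) j = some s ∧ (acceptables (P' j))[t]? = some s := by
  rw [Boston_eq_bSt] at h
  have key : ∀ T, bSt P' prio q T j = some s →
      ∃ t, t < T ∧ bSt P' prio q t j = none ∧ bSt P' prio q (t + 1) j = some s := by
    intro T
    induction T with
    | zero => intro h0; simp [bSt_zero] at h0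
    | succ n ih =>
      intro hn
      cases hbn : bSt P' prio q n j with
      | none => exact ⟨n, by omega, hbn, hn⟩
      | some u =>
        have := bSt_persist hbn (show n ≤ n + 1 by omega)
        rw [hn] at this
        have hus : s = u := by injection this
        subst hus
        obtain ⟨t, ht1, ht2, ht3⟩ := ih hbn
        exact ⟨t, by omega, ht2, ht3⟩
  obtain ⟨t, ht1, ht2, ht3⟩ := key _ h
  refine ⟨t, ht1, ht2, ht3, ?_⟩
  rw [bSt_succ, round_eq_some] at ht3
  rcases ht3 with hcon | ⟨-, hh, -⟩
  · rw [ht2] at hcon; exact absurd hcon (by simp)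
  · exact hh

lemma boston_accept_room (hprio : ∀ s, ValidPrio (prio s)) {t : ℕ} {j : I} {s : S}
    (h0 : bSt P' prio q t j = none) (h1 : bSt P' prio q (t + 1) j = some s) :
    (Finset.univ.filter (fun j' => bSt P' prio q t j' = some s)).card < q s := by
  rw [bSt_succ, round_eq_some] at h1
  rcases h1 with hcon | ⟨-, -, hmem⟩
  · rw [h0] at hcon; exact absurd hcon (by simp)
  · have hne : (bApp P' prio (bSt P' prio q t) t s).take
        (q s - (Finset.univ.filter (fun j' => bSt P' prio q t j' = some s)).card) ≠ [] :=
      List.ne_nil_of_mem hmem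
    have := List.length_pos_iff.mpr hne
    rw [List.length_take] at this
    have hcle := bFiber_card_le (P' := P') (q := q) hprio t s
    omega

end BostonTheory

section PieceE

variable {P' : I → List (Option S)} {prio : S → List I} {q : S → ℕ}

/-- If the Boston outcome is stable w.r.t. the reported profile, it coincides with DA. -/
theorem boston_eq_aDA (hB : ∀ i, (acceptables (P' i)).Nodup)
    (hprio : ∀ s, ValidPrio (prio s))
    (hσ : AStable (fun i => acceptables (P' i)) prio q (Boston P' prio q)) :
    aDA (fun i => acceptables (P' i)) prio q = Boston P' prio q := by
  set σ := Boston P' prio q with hσdef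
  set μ' := aDA (fun i => acceptables (P' i)) prio q with hμ'def
  have hν := aDA_stable (A := fun i => acceptables (P' i)) (q := q) hB hprio
  rw [← hμ'def] at hν
  have htri : ∀ (s : S) (a b : I), a ≠ b → ¬ prioLt (prio s) a b → prioLt (prio s) b a := by
    intro s a b hab hnlt
    have ha := (hprio s).2 a
    have hb := (hprio s).2 b
    have hinj := List.idxOf_inj (y := b) ha
    unfold prioLt at *
    rcases Nat.lt_trichotomy ((prio s).idxOf a) ((prio s).idxOf b) with h|h|h
    · exact absurd h hnlt
    · exact absurd (hinj.mp h) hab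
    · exact h
  have main : ∀ (n : ℕ) (i : I) (s : S), μ' i = some s →
      (acceptables (P' i)).idxOf s < n → ¬ ABetter (acceptables (P' i)) s (σ i) := by
    intro n
    induction n using Nat.strong_induction_on with
    | _ n ih =>
      intro i s hμ's hrn hbet
      have hsmem : s ∈ acceptables (P' i) := hν.1 i s hμ's
      have hrlen : (acceptables (P' i)).idxOf s < (acceptables (P' i)).length :=
        List.idxOf_lt_length_iff.mpr hsmem
      have hrT : (acceptables (P' i)).idxOf s < Fintype.card S :=
        lt_of_lt_of_le hrlen ((hB i).length_le_card)
      have hbr : bSt P' prio q ((acceptables (P' i)).idxOf s) i = none := by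
        cases hb : bSt P' prio q ((acceptables (P' i)).idxOf s) i with
        | none => rfl
        | some u =>
          obtain ⟨humem, hidxu⟩ := bSt_mem hB hb
          have hσu : σ i = some u := by
            rw [hσdef, Boston_eq_bSt]
            exact bSt_persist hb (by omega)
          rw [hσu] at hbet
          obtain ⟨-, hlt2⟩ := (hbet : u ∈ acceptables (P' i) ∧
            (acceptables (P' i)).idxOf s < (acceptables (P' i)).idxOf u)
          omega
      have hBr : (acceptables (P' i))[(acceptables (P' i)).idxOf s]? = some s := by
        rw [List.getElem?_eq_getElem hrlen]
        exact congrArg some (getElem_eq_of_indexOf hrlen rfl)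
      have hσinots : ¬ σ i = some s := by
        intro hc
        rw [hc] at hbet
        obtain ⟨-, hlt2⟩ := (hbet : s ∈ acceptables (P' i) ∧
          (acceptables (P' i)).idxOf s < (acceptables (P' i)).idxOf s)
        omega
      have hnext : ¬ bSt P' prio q ((acceptables (P' i)).idxOf s + 1) i = some s := by
        intro hc
        exact hσinots (by rw [hσdef, Boston_eq_bSt]; exact bSt_persist hc (by omega))
      have hfull1 := bReject_full hprio hbr hBr hnext
      have hfullT : (Finset.univ.filter (fun j => σ j = some s)).card = q s := by
        rw [hσdef, Boston_eq_bSt]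
        exact bFiber_full_persist hprio hfull1 (by omega)
      have hiμ' : i ∈ Finset.univ.filter (fun j => μ' j = some s) :=
        Finset.mem_filter.mpr ⟨Finset.mem_univ _, hμ's⟩
      have hiσ : i ∉ Finset.univ.filter (fun j => σ j = some s) := by
        rw [Finset.mem_filter]
        rintro ⟨-, hc⟩
        exact hσinots hc
      have hμcard : (Finset.univ.filter (fun j => μ' j = some s)).card ≤ q s := hν.2.1 s
      have hex : ∃ j, σ j = some s ∧ ¬ μ' j = some s := by
        by_contra hcon
        push_neg at hcon
        have hsub : Finset.univ.filter (fun j => σ j = some s) ⊆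
            Finset.univ.filter (fun j => μ' j = some s) := by
          intro j hj
          rw [Finset.mem_filter] at *
          exact ⟨Finset.mem_univ _, hcon j hj.2⟩
        have heqs := Finset.eq_of_subset_of_card_le hsub (by omega)
        rw [← heqs] at hiμ'
        exact hiσ hiμ'
      obtain ⟨j, hjσ, hjμ'⟩ := hex
      have hji : j ≠ i := by
        rintro rfl
        exact hσinots hjσ
      have hnlt : ¬ prioLt (prio s) i j := by
        intro hc
        exact hσ.2.2 i s ⟨hbet, Or.inr ⟨j, hjσ, hc⟩⟩
      have hjlt : prioLt (prio s) j i := htri s i j (Ne.symm hji) hnlt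
      have hsBj : s ∈ acceptables (P' j) := hσ.1 j s hjσ
      by_cases hbj : ABetter (acceptables (P' j)) s (μ' j)
      · exact hν.2.2 j s ⟨hbj, Or.inr ⟨i, hμ's, hjlt⟩⟩
      · cases hmj : μ' j with
        | none => exact hbj (by rw [hmj]; exact hsBj)
        | some u =>
          rw [hmj] at hbj
          have hu : u ∈ acceptables (P' j) := hν.1 j u hmj
          have hidxus : (acceptables (P' j)).idxOf u <
              (acceptables (P' j)).idxOf s := by
            have hne : u ≠ s := by
              rintro rfl
              exact hjμ' hmj
            have h3 : ¬ ((acceptables (P' j)).idxOf s <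
                (acceptables (P' j)).idxOf u) := fun hc => hbj ⟨hu, hc⟩
            have h4 := List.idxOf_inj (y := s) hu
            rcases Nat.lt_trichotomy ((acceptables (P' j)).idxOf u)
              ((acceptables (P' j)).idxOf s) with h|h|h
            · exact h
            · exact absurd (h4.mp h) hne
            · exact absurd h h3
          obtain ⟨tj, htjT, htj0, htj1, htjB⟩ := boston_accept_round (hσdef ▸ hjσ)
          have htjidx : tj = (acceptables (P' j)).idxOf s := by
            obtain ⟨hlt2, hEq2⟩ := List.getElem?_eq_some_iff.mp htjB
            rw [← hEq2, List.Nodup.idxOf_getElem (hB j)]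
          have htjr : tj ≤ (acceptables (P' i)).idxOf s := by
            by_contra hcon
            push_neg at hcon
            have hroom := boston_accept_room hprio htj0 htj1
            have hfull2 : (Finset.univ.filter
                (fun j' => bSt P' prio q tj j' = some s)).card = q s :=
              bFiber_full_persist hprio hfull1 (by omega)
            omega
          have hbet2 : ABetter (acceptables (P' j)) u (σ j) := by
            rw [hjσ]
            exact ⟨hsBj, hidxus⟩
          exact ih ((acceptables (P' i)).idxOf s) (by omega) j u hmj (by omega) hbet2
  funext i
  cases hσi : σ i with
  | none =>
    cases hμ'i : μ' i with
    | none => rfl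
    | some m =>
      exfalso
      have hmmem : m ∈ acceptables (P' i) := hν.1 i m hμ'i
      exact main ((acceptables (P' i)).idxOf m + 1) i m hμ'i (by omega)
        (by rw [hσi]; exact hmmem)
  | some v =>
    obtain ⟨m, hm, hidxm⟩ := aDA_opt hB hprio hσ i v hσi
    have hm' : μ' i = some m := hm
    have hvmem : v ∈ acceptables (P' i) := hσ.1 i v hσi
    have hmmem : m ∈ acceptables (P' i) := hν.1 i m hm'
    have hnb := main ((acceptables (P' i)).idxOf m + 1) i m hm' (by omega)
    rw [hσi] at hnb
    have hge : ¬ ((acceptables (P' i)).idxOf m < (acceptables (P' i)).idxOf v) :=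
      fun hc => hnb ⟨hvmem, hc⟩
    have hmv : m = v := List.idxOf_inj (y := v) hmmem |>.mp (by omega)
    rw [hm', hmv]

end PieceE

section Final

variable {P : I → List (Option S)} {prio : S → List I} {q : S → ℕ}

/-- Piece E: if the constrained Boston outcome is stable at `P`, it equals `GS^k`. -/
theorem gsk_eq_bostonk (hP : ∀ i, ValidPref (P i)) (hprio : ∀ s, ValidPrio (prio s))
    {k : ℕ} (hstB : IsStable P prio q (Bostonk k P prio q)) :
    GSk k P prio q = Bostonk k P prio q := by
  have hBacc : ∀ i, acceptables (truncate (P i) k) = (acceptables (P i)).take k :=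
    fun i => acceptables_truncate (P i) k
  have hB : ∀ i, (acceptables (truncate (P i) k)).Nodup := by
    intro i
    rw [hBacc i]
    exact take_nodup (acceptables_nodup (hP i).1) k
  have hBostonk : Bostonk k P prio q = Boston (fun i => truncate (P i) k) prio q := rfl
  have hmat : IsMatching q (Boston (fun i => truncate (P i) k) prio q) := by
    intro s
    rw [Boston_eq_bSt]
    exact bFiber_card_le hprio _ s
  have hAIR : ∀ i s, Boston (fun i => truncate (P i) k) prio q i = some s →
      s ∈ acceptables (truncate (P i) k) := by
    intro i s h
    rw [Boston_eq_bSt] at h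
    exact (bSt_mem hB h).1
  have hstB' : IsStable P prio q (Boston (fun i => truncate (P i) k) prio q) := by
    rw [← hBostonk]
    exact hstB
  have hfull : AStable (fun i => acceptables (P i)) prio q
      (Boston (fun i => truncate (P i) k) prio q) :=
    (isStable_iff_AStable hP hmat).mp hstB'
  have hσA : AStable (fun i => acceptables (truncate (P i) k)) prio q
      (Boston (fun i => truncate (P i) k) prio q) := by
    refine ⟨hAIR, hmat, ?_⟩
    rintro i s ⟨hbet, hseat⟩
    simp only [hBacc] at hbet
    exact hfull.2.2 i s ⟨ABetter_take_imp hbet, hseat⟩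
  have hmain := boston_eq_aDA hB hprio hσA
  rw [GSk_eq_aDA, hBostonk, ← hmain,
    show (fun i => acceptables (truncate (P i) k)) =
      (fun i => (acceptables (P i)).take k) from funext hBacc]

end Final

/-- Corollary 3: (i) for `k > 1`, if `β^k(P,≻,q)` is stable then
`GS^k(P,≻,q)` is stable and `GS^k` is not manipulable at `(P,≻,q)`; (ii) for
`k > ℓ > 1`, if `GS^ℓ(P,≻,q)` is stable then `GS^k(P,≻,q)` is stable and `GS^k` is not
manipulable at `(P,≻,q)`. -/
theorem stable_implies_gsk_stable_and_not_manipulable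
    {I S : Type*} [Fintype I] [DecidableEq I] [Fintype S] [DecidableEq S]
    (hIS : Fintype.card S < Fintype.card I)
    (P : I → List (Option S)) (prio : S → List I) (q : S → ℕ)
    (hP : ∀ i, ValidPref (P i)) (hprio : ∀ s, ValidPrio (prio s)) :
    (∀ k : ℕ, 1 < k → IsStable P prio q (Bostonk k P prio q) →
        IsStable P prio q (GSk k P prio q) ∧
        NotManipulable (fun R => GSk k R prio q) P) ∧
    (∀ k l : ℕ, 1 < l → l < k → IsStable P prio q (GSk l P prio q) →
        IsStable P prio q (GSk k P prio q) ∧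
        NotManipulable (fun R => GSk k R prio q) P) := by
  constructor
  · intro k hk hstB
    have hGE : GSk k P prio q = Bostonk k P prio q := gsk_eq_bostonk hP hprio hstB
    refine ⟨by rw [hGE]; exact hstB, ?_⟩
    exact gsk_not_manipulable hP hprio (by rw [hGE]; exact hstB)
  · intro k l hl hlk hstL
    have hEq : GSk k P prio q = GSk l P prio q :=
      gsk_eq_of_stable_le hP hprio (le_of_lt hlk) hstL
    refine ⟨by rw [hEq]; exact hstL, ?_⟩
    exact gsk_not_manipulable hP hprio (by rw [hEq]; exact hstL)

end SchoolChoice
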